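/- The Cramér CDF space is complete: if (F_n) is a sequence of CDFs of probability measures on ℝ with F_n − F_{δ₀} ∈ L²(ℝ) for all n, and (F_n) is Cauchy in the L²(ℝ) distance, then there exists a function F : ℝ → ℝ that is nondecreasing, right-continuous, takes values in [0,1], satisfies F(x) → 0 as x → −∞ and F(x) → 1 as x → +∞ (hence is the CDF of a probability measure), satisfies F − F_{δ₀} ∈ L²(ℝ), and satisfies ‖F_n − F‖_{L²(ℝ)} → 0. -/

import Mathlib

open MeasureTheory Filter

/-- The CDF of the Dirac measure at `0`: the indicator of `[0, ∞)`. -/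
noncomputable def diracCdf (x : ℝ) : ℝ := if 0 ≤ x then 1 else 0

/-- **Completeness of the Cramér CDF space.**
If `(Fₙ)` is a sequence of CDFs of probability measures on `ℝ` with `Fₙ - F_{δ₀} ∈ L²(ℝ)`
for all `n`, Cauchy in the L²(ℝ) distance, then there exists `F : ℝ → ℝ` nondecreasing,
right-continuous, with values in `[0,1]`, tending to `0` at `-∞` and `1` at `+∞`
(hence the CDF of a probability measure), with `F - F_{δ₀} ∈ L²(ℝ)` and
`‖Fₙ - F‖_{L²} → 0`. -/
theorem cramer_cdf_space_complete
    (F : ℕ → ℝ → ℝ)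
    (hcdf : ∀ n, ∃ P : Measure ℝ, IsProbabilityMeasure P ∧
      ∀ x, F n x = (P (Set.Iic x)).toReal)
    (hL2 : ∀ n, MemLp (fun x => F n x - diracCdf x) 2 (volume : Measure ℝ))
    (hcauchy : ∀ ε : ℝ, 0 < ε → ∃ N : ℕ, ∀ n ≥ N, ∀ m ≥ N,
      eLpNorm (fun x => F n x - F m x) 2 volume ≤ ENNReal.ofReal ε) :
    ∃ Flim : ℝ → ℝ,
      Monotone Flim ∧
      (∀ x, ContinuousWithinAt Flim (Set.Ici x) x) ∧
      (∀ x, Flim x ∈ Set.Icc (0 : ℝ) 1) ∧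
      Tendsto Flim atBot (nhds 0) ∧
      Tendsto Flim atTop (nhds 1) ∧
      MemLp (fun x => Flim x - diracCdf x) 2 (volume : Measure ℝ) ∧
      Tendsto (fun n => eLpNorm (fun x => F n x - Flim x) 2 volume) atTop (nhds 0) := by
  classical
  choose P hPprob hPF using hcdf
  have hF0 : ∀ n x, 0 ≤ F n x := fun n x => by rw [hPF n x]; exact ENNReal.toReal_nonneg
  have hF1 : ∀ n x, F n x ≤ 1 := by
    intro n x
    haveI := hPprob n
    rw [hPF n x]
    exact ENNReal.toReal_le_of_le_ofReal zero_le_one (by simpa using prob_le_one)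
  have hFmono : ∀ n, Monotone (F n) := by
    intro n x y hxy
    haveI := hPprob n
    rw [hPF n x, hPF n y]
    exact ENNReal.toReal_mono (measure_ne_top _ _)
      (measure_mono (Set.Iic_subset_Iic.2 hxy))
  set G : ℕ → ℝ → ℝ := fun n x => F n x - diracCdf x with hGdef
  set g : ℕ → Lp ℝ 2 (volume : Measure ℝ) := fun n => (hL2 n).toLp _ with hgdef
  have hgF : ∀ n, (g n : ℝ → ℝ) =ᵐ[volume] G n := fun n => (hL2 n).coeFn_toLp
  -- The sequence is Cauchy in L²
  have hcs : CauchySeq g := by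
    rw [Metric.cauchySeq_iff]
    intro ε hε
    obtain ⟨N, hN⟩ := hcauchy (ε / 2) (half_pos hε)
    refine ⟨N, fun n hn m hm => ?_⟩
    have h1 : eLpNorm ((g n : ℝ → ℝ) - (g m : ℝ → ℝ)) 2 volume
        = eLpNorm (fun x => F n x - F m x) 2 volume := by
      apply eLpNorm_congr_ae
      filter_upwards [hgF n, hgF m] with x hx hy
      simp only [Pi.sub_apply, hx, hy, hGdef]
      ring
    have h2 : eLpNorm ((g n : ℝ → ℝ) - (g m : ℝ → ℝ)) 2 volume
        ≤ ENNReal.ofReal (ε / 2) := h1 ▸ hN n hn m hm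
    have h3 : dist (g n) (g m) ≤ ε / 2 := by
      rw [Lp.dist_def]
      exact ENNReal.toReal_le_of_le_ofReal (half_pos hε).le
        h2
    linarith
  obtain ⟨glim, hglim⟩ := cauchySeq_tendsto_of_complete hcs
  -- convergence of eLpNorms to the limit
  have hconv : Tendsto (fun n => eLpNorm (G n - (glim : ℝ → ℝ)) 2 volume) atTop (nhds 0) := by
    have hdist : Tendsto (fun n => ‖g n - glim‖) atTop (nhds 0) := by
      simpa [dist_eq_norm] using (tendsto_iff_dist_tendsto_zero.1 hglim)
    have heq : ∀ n, eLpNorm (G n - (glim : ℝ → ℝ)) 2 volume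
        = ENNReal.ofReal ‖g n - glim‖ := by
      intro n
      have h1 : eLpNorm (G n - (glim : ℝ → ℝ)) 2 volume
          = eLpNorm ((g n : ℝ → ℝ) - (glim : ℝ → ℝ)) 2 volume := by
        apply eLpNorm_congr_ae
        filter_upwards [hgF n] with x hx
        simp [hx]
      have h2 : eLpNorm ((g n : ℝ → ℝ) - (glim : ℝ → ℝ)) 2 volume
          = eLpNorm ((g n - glim : Lp ℝ 2 volume) : ℝ → ℝ) 2 volume :=
        eLpNorm_congr_ae (Lp.coeFn_sub (g n) glim).symm
      rw [h1, h2, Lp.norm_def, ENNReal.ofReal_toReal (Lp.eLpNorm_ne_top _)]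
    have := ENNReal.tendsto_ofReal (a := 0) hdist
    rw [ENNReal.ofReal_zero] at this
    simpa [heq] using this
  -- a.e. convergent subsequence
  have htim : TendstoInMeasure volume G atTop (glim : ℝ → ℝ) :=
    tendstoInMeasure_of_tendsto_eLpNorm (p := 2) (by norm_num)
      (fun n => (hL2 n).aestronglyMeasurable) (Lp.aestronglyMeasurable glim) hconv
  obtain ⟨ns, hns, haes⟩ := htim.exists_seq_tendsto_ae
  set A : Set ℝ := {x | Tendsto (fun k => G (ns k) x) atTop (nhds (glim x))} with hAdef
  have hAc : volume Aᶜ = 0 := by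
    have := ae_iff.1 haes
    simpa [hAdef, Set.compl_setOf] using this
  set h : ℝ → ℝ := fun y => glim y + diracCdf y with hhdef
  have hFlimTo : ∀ y ∈ A, Tendsto (fun k => F (ns k) y) atTop (nhds (h y)) := by
    intro y hy
    have := (hy : Tendsto (fun k => G (ns k) y) atTop (nhds (glim y))).add_const (diracCdf y)
    simpa [hGdef, hhdef] using this
  have hh0 : ∀ y ∈ A, 0 ≤ h y := fun y hy =>
    ge_of_tendsto (hFlimTo y hy) (Eventually.of_forall fun k => hF0 _ y)
  have hh1 : ∀ y ∈ A, h y ≤ 1 := fun y hy =>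
    le_of_tendsto (hFlimTo y hy) (Eventually.of_forall fun k => hF1 _ y)
  have hhmono : ∀ y ∈ A, ∀ z ∈ A, y ≤ z → h y ≤ h z := fun y hy z hz hyz =>
    le_of_tendsto_of_tendsto' (hFlimTo y hy) (hFlimTo z hz) fun k => hFmono _ hyz
  have hAinter : ∀ a b : ℝ, a < b → (A ∩ Set.Ioo a b).Nonempty := by
    intro a b hab
    by_contra hne
    rw [Set.not_nonempty_iff_eq_empty] at hne
    have hsub : Set.Ioo a b ⊆ Aᶜ := by
      intro x hx hxA
      exact Set.eq_empty_iff_forall_notMem.1 hne x ⟨hxA, hx⟩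
    have := measure_mono_null hsub hAc
    rw [Real.volume_Ioo] at this
    exact (ENNReal.ofReal_pos.2 (by linarith)).ne' this
  have hAne : ∀ x : ℝ, (A ∩ Set.Ioi x).Nonempty := by
    intro x
    obtain ⟨y, hyA, hy1, _⟩ := hAinter x (x + 1) (by linarith)
    exact ⟨y, hyA, hy1⟩
  -- definition of the limit CDF
  set Flim : ℝ → ℝ := fun x => sInf (h '' (A ∩ Set.Ioi x)) with hFlimdef
  have hSne : ∀ x : ℝ, (h '' (A ∩ Set.Ioi x)).Nonempty := fun x => (hAne x).image h
  have hSbdd : ∀ x : ℝ, BddBelow (h '' (A ∩ Set.Ioi x)) := by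
    intro x
    exact ⟨0, fun b ⟨y, hy, hby⟩ => hby ▸ hh0 y hy.1⟩
  have hkey1 : ∀ x : ℝ, ∀ y, y ∈ A → x < y → Flim x ≤ h y := by
    intro x y hyA hxy
    exact csInf_le (hSbdd x) ⟨y, ⟨hyA, hxy⟩, rfl⟩
  have hkey2 : ∀ x ∈ A, h x ≤ Flim x := by
    intro x hx
    refine le_csInf (hSne x) ?_
    rintro b ⟨y, ⟨hyA, hxy⟩, rfl⟩
    exact hhmono x hx y hyA hxy.le
  have hmono : Monotone Flim := by
    intro x x' hxx'
    refine csInf_le_csInf (hSbdd x) (hSne x') (Set.image_mono ?_)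
    exact Set.inter_subset_inter_right _ (Set.Ioi_subset_Ioi hxx')
  have hIcc : ∀ x, Flim x ∈ Set.Icc (0 : ℝ) 1 := by
    intro x
    obtain ⟨y, hyA, hxy⟩ := hAne x
    constructor
    · exact le_csInf (hSne x) fun b ⟨z, hz, hbz⟩ => hbz ▸ hh0 z hz.1
    · exact le_trans (hkey1 x y hyA hxy) (hh1 y hyA)
  -- right continuity
  have hsInfEq : ∀ x : ℝ, sInf (Flim '' Set.Ioi x) = Flim x := by
    intro x
    apply le_antisymm
    · apply le_of_forall_pos_le_add
      intro ε hε
      obtain ⟨b, ⟨y, ⟨hyA, hxy⟩, rfl⟩, hb⟩ :=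
        exists_lt_of_csInf_lt (hSne x) (show Flim x < Flim x + ε by linarith)
      have hx2 : x < (x + y) / 2 := by simp only [Set.mem_Ioi] at hxy; linarith
      have hy2 : (x + y) / 2 < y := by simp only [Set.mem_Ioi] at hxy; linarith
      calc sInf (Flim '' Set.Ioi x) ≤ Flim ((x + y) / 2) :=
            csInf_le ⟨0, fun b ⟨z, _, hbz⟩ => hbz ▸ (hIcc z).1⟩ ⟨(x + y) / 2, hx2, rfl⟩
        _ ≤ h y := hkey1 _ y hyA hy2
        _ ≤ Flim x + ε := hb.le
    · refine le_csInf ((Set.nonempty_Ioi (a := x)).image Flim) ?_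
      rintro b ⟨x', hx', rfl⟩
      exact hmono (le_of_lt hx')
  have hrc : ∀ x, ContinuousWithinAt Flim (Set.Ici x) x := by
    intro x
    rw [← Set.Ioi_insert, continuousWithinAt_insert_self,
      hmono.continuousWithinAt_Ioi_iff_rightLim_eq,
      hmono.rightLim_eq_sInf]
    exact hsInfEq x
  -- a.e. identification of Flim with glim + diracCdf
  have hcontAe : ∀ᵐ x ∂(volume : Measure ℝ), ContinuousAt Flim x := by
    rw [ae_iff]
    exact Set.Countable.measure_zero hmono.countable_not_continuousAt _
  have hAae : ∀ᵐ x ∂(volume : Measure ℝ), x ∈ A := by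
    rw [ae_iff]
    exact hAc
  have haeEq : (fun x => Flim x - diracCdf x) =ᵐ[volume] (glim : ℝ → ℝ) := by
    filter_upwards [hcontAe, hAae] with x hcont hxA
    have hle : Flim x ≤ h x := by
      have hforall : ∀ w < x, Flim w ≤ h x := by
        intro w hw
        obtain ⟨w', hw'A, hw1, hw2⟩ := hAinter w x hw
        exact le_trans (hkey1 w w' hw'A hw1) (hhmono w' hw'A x hxA hw2.le)
      have htd : Tendsto Flim (nhdsWithin x (Set.Iio x)) (nhds (Flim x)) :=
        (hcont.tendsto).mono_left nhdsWithin_le_nhds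
      exact le_of_tendsto htd (eventually_nhdsWithin_of_forall fun w hw => hforall w hw)
    have heq : Flim x = h x := le_antisymm hle (hkey2 x hxA)
    rw [heq, hhdef]
    ring
  have hmemLp : MemLp (fun x => Flim x - diracCdf x) 2 (volume : Measure ℝ) :=
    (memLp_congr_ae haeEq).2 (Lp.memLp glim)
  -- limits at -∞ and +∞
  have hbddB : BddBelow (Set.range Flim) := ⟨0, by rintro b ⟨x, rfl⟩; exact (hIcc x).1⟩
  have hbddA : BddAbove (Set.range Flim) := ⟨1, by rintro b ⟨x, rfl⟩; exact (hIcc x).2⟩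
  have hbot0 : Tendsto Flim atBot (nhds 0) := by
    have htd := tendsto_atBot_ciInf hmono hbddB
    have hc0 : ⨅ x, Flim x = 0 := by
      by_contra hc
      have hcpos : 0 < ⨅ x, Flim x :=
        lt_of_le_of_ne (le_ciInf fun x => (hIcc x).1) (Ne.symm hc)
      set c : ℝ := ⨅ x, Flim x
      have hsub : Set.Iio (0 : ℝ) ⊆ {x | Real.toNNReal c ≤ ‖Flim x - diracCdf x‖₊} := by
        intro x hx
        have hd : diracCdf x = 0 := if_neg (not_le.2 hx)
        have hcf : c ≤ Flim x := ciInf_le hbddB x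
        rw [Set.mem_setOf_eq, Real.toNNReal_le_iff_le_coe, coe_nnnorm, Real.norm_eq_abs, hd,
          sub_zero]
        exact hcf.trans (le_abs_self _)
      have hfin := hmemLp.meas_ge_lt_top (by norm_num) (by norm_num)
        (ε := Real.toNNReal c) (Real.toNNReal_pos.2 hcpos).ne'
      have := (measure_mono hsub).trans_lt hfin
      rw [Real.volume_Iio] at this
      exact (lt_irrefl _ this).elim
    rwa [hc0] at htd
  have htop1 : Tendsto Flim atTop (nhds 1) := by
    have htd := tendsto_atTop_ciSup hmono hbddA
    have hd1 : ⨆ x, Flim x = 1 := by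
      by_contra hd
      have hdlt : (⨆ x, Flim x) < 1 :=
        lt_of_le_of_ne (ciSup_le fun x => (hIcc x).2) hd
      set d : ℝ := ⨆ x, Flim x
      have hpos : 0 < 1 - d := by linarith
      have hsub : Set.Ici (0 : ℝ) ⊆ {x | Real.toNNReal (1 - d) ≤ ‖Flim x - diracCdf x‖₊} := by
        intro x hx
        have hdd : diracCdf x = 1 := if_pos hx
        have hxd : Flim x ≤ d := le_ciSup hbddA x
        rw [Set.mem_setOf_eq, Real.toNNReal_le_iff_le_coe, coe_nnnorm, Real.norm_eq_abs, hdd,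
          abs_of_nonpos (by linarith [(hIcc x).2])]
        linarith
      have hfin := hmemLp.meas_ge_lt_top (by norm_num) (by norm_num)
        (ε := Real.toNNReal (1 - d)) (Real.toNNReal_pos.2 hpos).ne'
      have := (measure_mono hsub).trans_lt hfin
      rw [Real.volume_Ici] at this
      exact (lt_irrefl _ this).elim
    rwa [hd1] at htd
  -- convergence in L²
  have hfinal : Tendsto (fun n => eLpNorm (fun x => F n x - Flim x) 2 volume) atTop (nhds 0) := by
    have heq : ∀ n, eLpNorm (fun x => F n x - Flim x) 2 volume
        = eLpNorm (G n - (glim : ℝ → ℝ)) 2 volume := by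
      intro n
      apply eLpNorm_congr_ae
      filter_upwards [haeEq] with x hx
      simp only [Pi.sub_apply, hGdef, ← hx]
      ring
    simpa [heq] using hconv
  exact ⟨Flim, hmono, hrc, hIcc, hbot0, htop1, hmemLp, hfinal⟩
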